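/- For a graph G, |corona(G)| + |core(G)| = 2α(G) if and only if |⋃Γ| + |⋂Γ| = 2α(G) holds for every nonempty subcollection Γ of Ω(G). -/

import Mathlib

open Set

variable {V : Type*}

/-- `S` is an independent set of `G`. -/
def IndepSet (G : SimpleGraph V) (S : Set V) : Prop :=
  ∀ x ∈ S, ∀ y ∈ S, ¬ G.Adj x y

/-- The independence number `α(G)`. -/
noncomputable def alpha (G : SimpleGraph V) : ℕ :=
  sSup {n | ∃ S : Set V, IndepSet G S ∧ S.ncard = n}

/-- `S` is a maximum independent set of `G`. -/
def MaxIndep (G : SimpleGraph V) (S : Set V) : Prop :=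
  IndepSet G S ∧ S.ncard = alpha G

/-- `Ω(G)`, the family of all maximum independent sets. -/
def Omega (G : SimpleGraph V) : Set (Set V) := {S | MaxIndep G S}

/-- `core(G)`, the intersection of all maximum independent sets. -/
def core (G : SimpleGraph V) : Set V := ⋂₀ Omega G

/-- `corona(G)`, the union of all maximum independent sets. -/
def corona (G : SimpleGraph V) : Set V := ⋃₀ Omega G

/-- The matching number `μ(G)`. -/
noncomputable def matchNum (G : SimpleGraph V) : ℕ :=
  sSup {n | ∃ M : G.Subgraph, M.IsMatching ∧ M.edgeSet.ncard = n}

/-- A matching from `X` into `Y`: an injection `f` on `X` into `Y` such that each `x ∈ X`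
is adjacent to `f x` and the edges `{x, f x}` are pairwise disjoint. -/
def MatchingFrom (G : SimpleGraph V) (X Y : Set V) : Prop :=
  ∃ f : V → V, Set.InjOn f X ∧ (∀ x ∈ X, f x ∈ Y ∧ G.Adj x (f x)) ∧
    ∀ x ∈ X, ∀ y ∈ X, x ≠ y → f x ≠ y

lemma bdd_aux [Fintype V] (G : SimpleGraph V) :
    BddAbove {n | ∃ S : Set V, IndepSet G S ∧ S.ncard = n} := by
  refine ⟨Fintype.card V, ?_⟩
  rintro n ⟨S, -, rfl⟩
  simpa [Set.ncard_univ] using Set.ncard_le_ncard (Set.subset_univ S) Set.finite_univ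

lemma indep_ncard_le [Fintype V] (G : SimpleGraph V) {S : Set V} (h : IndepSet G S) :
    S.ncard ≤ alpha G :=
  le_csSup (bdd_aux G) ⟨S, h, rfl⟩

lemma omega_nonempty [Fintype V] (G : SimpleGraph V) : (Omega G).Nonempty := by
  have h0 : (0 : ℕ) ∈ {n | ∃ S : Set V, IndepSet G S ∧ S.ncard = n} :=
    ⟨∅, by intro x hx; simp at hx, by simp⟩
  obtain ⟨S, hS, hcard⟩ := Nat.sSup_mem ⟨0, h0⟩ (bdd_aux G)
  exact ⟨S, hS, hcard⟩

lemma sum_le_insert [Fintype V] (G : SimpleGraph V) {Γ : Set (Set V)} (hΓ : Γ ⊆ Omega G)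
    (hne : Γ.Nonempty) {S : Set V} (hS : S ∈ Omega G) :
    (⋃₀ Γ).ncard + (⋂₀ Γ).ncard ≤ (⋃₀ insert S Γ).ncard + (⋂₀ insert S Γ).ncard := by
  set U := ⋃₀ Γ with hUdef
  set I := ⋂₀ Γ with hIdef
  have hU : ⋃₀ insert S Γ = S ∪ U := Set.sUnion_insert S Γ
  have hI : ⋂₀ insert S Γ = S ∩ I := Set.sInter_insert S Γ
  have hA : (S ∪ U).ncard + (S ∩ U).ncard = S.ncard + U.ncard :=
    Set.ncard_union_add_ncard_inter S U (Set.toFinite S) (Set.toFinite U)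
  have hB : (I ∩ S).ncard + (I \ S).ncard = I.ncard :=
    Set.ncard_inter_add_ncard_diff_eq_ncard I S (Set.toFinite I)
  obtain ⟨T, hT⟩ := hne
  -- independence of (I \ S) ∪ (S ∩ U)
  have hindep : IndepSet G ((I \ S) ∪ (S ∩ U)) := by
    intro x hx y hy
    rcases hx with hx | hx
    · rcases hy with hy | hy
      · exact (hΓ hT).1 x (hx.1 T hT) y (hy.1 T hT)
      · obtain ⟨T', hT', hyT'⟩ := hy.2
        exact (hΓ hT').1 x (hx.1 T' hT') y hyT'
    · rcases hy with hy | hy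
      · obtain ⟨T', hT', hxT'⟩ := hx.2
        exact (hΓ hT').1 x hxT' y (hy.1 T' hT')
      · exact hS.1 x hx.1 y hy.1
  have hdisj : Disjoint (I \ S) (S ∩ U) := by
    rw [Set.disjoint_left]
    rintro a ⟨-, haS⟩ ⟨haS', -⟩
    exact haS haS'
  have hC : (I \ S).ncard + (S ∩ U).ncard ≤ S.ncard := by
    rw [← Set.ncard_union_eq hdisj (Set.toFinite _) (Set.toFinite _)]
    rw [hS.2]
    exact indep_ncard_le G hindep
  rw [hU, hI, Set.inter_comm S I]
  omega

lemma sum_le_union [Fintype V] (G : SimpleGraph V) {Γ E : Set (Set V)} (hΓ : Γ ⊆ Omega G)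
    (hne : Γ.Nonempty) (hE : E ⊆ Omega G) :
    (⋃₀ Γ).ncard + (⋂₀ Γ).ncard ≤ (⋃₀ (Γ ∪ E)).ncard + (⋂₀ (Γ ∪ E)).ncard := by
  refine Set.Finite.induction_on (motive := fun E _ => E ⊆ Omega G →
    (⋃₀ Γ).ncard + (⋂₀ Γ).ncard ≤ (⋃₀ (Γ ∪ E)).ncard + (⋂₀ (Γ ∪ E)).ncard)
    E (Set.toFinite E) ?_ ?_ hE
  · simp
  · intro a s ha hs ih hsub
    have h1 := ih (fun x hx => hsub (Set.mem_insert_of_mem a hx))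
    have h2 : Γ ∪ insert a s = insert a (Γ ∪ s) := by
      ext x; simp [or_comm, or_assoc, or_left_comm]
    rw [h2]
    refine h1.trans (sum_le_insert G ?_ ?_ (hsub (Set.mem_insert a s)))
    · exact Set.union_subset hΓ (fun x hx => hsub (Set.mem_insert_of_mem a hx))
    · exact hne.mono Set.subset_union_left

theorem stmt_5 [Fintype V] (G : SimpleGraph V) :
    ((corona G).ncard + (core G).ncard = 2 * alpha G) ↔
      (∀ Γ : Set (Set V), Γ ⊆ Omega G → Γ.Nonempty →
        (⋃₀ Γ).ncard + (⋂₀ Γ).ncard = 2 * alpha G) := by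
  constructor
  · intro h Γ hΓ hne
    -- upper bound
    have h1 := sum_le_union G hΓ hne (Set.Subset.refl (Omega G))
    rw [Set.union_eq_self_of_subset_left hΓ] at h1
    -- lower bound
    obtain ⟨S, hSΓ⟩ := hne
    have h2 := sum_le_union G (Set.singleton_subset_iff.mpr (hΓ hSΓ))
      ⟨S, rfl⟩ hΓ
    rw [Set.union_eq_self_of_subset_left (Set.singleton_subset_iff.mpr hSΓ)] at h2
    simp only [Set.sUnion_singleton, Set.sInter_singleton] at h2
    have hSα : S.ncard = alpha G := (hΓ hSΓ).2
    have hcc : (corona G).ncard + (core G).ncard = 2 * alpha G := h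
    unfold corona core at hcc
    omega
  · intro h
    exact h (Omega G) (Set.Subset.refl _) (omega_nonempty G)
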